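/- Let A and B be commuting self-adjoint linear operators on a finite-dimensional complex inner product space, let E ∈ ℝ, and let P_A := χ_{(−∞, E]}(A) and P_B := χ_{(−∞, E]}(B) be the spectral projections of A and B onto (−∞, E]. Then the operator −(A − B)(P_A − P_B) is self-adjoint and positive semidefinite. -/

import Mathlib

noncomputable section
open Module.End ContinuousLinearMap

local notation "⟪" x ", " y "⟫" => @inner ℂ _ _ x y

/-- Action of a spectral projection on an eigenvector. -/
lemma proj_eig_apply {𝓗 : Type} [NormedAddCommGroup 𝓗] [InnerProductSpace ℂ 𝓗] [FiniteDimensional ℂ 𝓗]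
    (A P : 𝓗 →L[ℂ] 𝓗) (E : ℝ)
    (hAsym : (A : 𝓗 →ₗ[ℂ] 𝓗).IsSymmetric)
    (hPsa : IsSelfAdjoint P) (hPidem : P ∘L P = P)
    (hPr : LinearMap.range (P : 𝓗 →ₗ[ℂ] 𝓗)
      = ⨆ (μ : ℝ) (_ : μ ≤ E), Module.End.eigenspace (A : 𝓗 →ₗ[ℂ] 𝓗) (μ : ℂ))
    {μ : ℝ} {x : 𝓗} (hx : x ∈ Module.End.eigenspace (A : 𝓗 →ₗ[ℂ] 𝓗) (μ : ℂ)) :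
    P x = if μ ≤ E then x else 0 := by
  split_ifs with h
  · have hxr : x ∈ LinearMap.range (P : 𝓗 →ₗ[ℂ] 𝓗) := by
      rw [hPr]
      exact Submodule.mem_iSup_of_mem μ (Submodule.mem_iSup_of_mem h hx)
    obtain ⟨y, hy⟩ := hxr
    have h2 : P (P y) = P y := by
      have := congrArg (fun (T : 𝓗 →L[ℂ] 𝓗) => T y) hPidem
      simpa using this
    simp only [ContinuousLinearMap.coe_coe] at hy
    rw [← hy, h2]
  · -- x is orthogonal to the range of P
    have hxo : x ∈ (LinearMap.range (P : 𝓗 →ₗ[ℂ] 𝓗))ᗮ := by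
      rw [hPr, ← Submodule.iInf_orthogonal]
      refine Submodule.mem_iInf _ |>.2 fun μ' => ?_
      by_cases hμ' : μ' ≤ E
      · rw [iSup_pos hμ']
        intro u hu
        have hne : (μ' : ℂ) ≠ (μ : ℂ) := by
          simp only [ne_eq, Complex.ofReal_inj]
          exact fun hEq => absurd (hEq ▸ hμ') h
        exact hAsym.orthogonalFamily_eigenspaces hne ⟨u, hu⟩ ⟨x, hx⟩
      · rw [iSup_neg hμ']
        simp
    have key : ⟪P x, P x⟫ = 0 := by
      have h1 : ⟪(ContinuousLinearMap.adjoint P) x, P x⟫ = ⟪x, P (P x)⟫ :=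
        ContinuousLinearMap.adjoint_inner_left P (P x) x
      rw [ContinuousLinearMap.isSelfAdjoint_iff'.mp hPsa] at h1
      rw [h1]
      have hmem : P (P x) ∈ LinearMap.range (P : 𝓗 →ₗ[ℂ] 𝓗) :=
        ⟨P x, rfl⟩
      exact (Submodule.mem_orthogonal' _ x).1 hxo _ hmem
    simpa [inner_self_eq_zero] using key

lemma isPositive_of_onb_eigen {𝓗 : Type} [NormedAddCommGroup 𝓗] [InnerProductSpace ℂ 𝓗]
    [FiniteDimensional ℂ 𝓗] (T : 𝓗 →L[ℂ] 𝓗) {n : ℕ} (b : OrthonormalBasis (Fin n) ℂ 𝓗)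
    (c : Fin n → ℝ) (hc : ∀ k, 0 ≤ c k) (hT : ∀ k, T (b k) = (c k : ℂ) • b k) :
    T.IsPositive := by
  have hadj : ContinuousLinearMap.adjoint T = T := by
    apply ContinuousLinearMap.coe_injective
    apply b.toBasis.ext
    intro k
    simp only [OrthonormalBasis.coe_toBasis, ContinuousLinearMap.coe_coe]
    -- show adjoint T (b k) = T (b k) = c k • b k
    apply b.repr.injective
    ext j
    rw [b.repr_apply_apply, b.repr_apply_apply]
    have h1 : ⟪b j, (ContinuousLinearMap.adjoint T) (b k)⟫ = ⟪T (b j), b k⟫ :=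
      ContinuousLinearMap.adjoint_inner_right T (b j) (b k)
    rw [h1, hT j, hT k, inner_smul_left, inner_smul_right, Complex.conj_ofReal]
    rcases eq_or_ne j k with h | h
    · rw [h]
    · rw [b.orthonormal.2 h, mul_zero, mul_zero]
  constructor
  · exact ContinuousLinearMap.isSelfAdjoint_iff_isSymmetric.mp (ContinuousLinearMap.isSelfAdjoint_iff'.mpr hadj)
  · intro x
    have expand : T x = ∑ j, (b.repr x j * (c j : ℂ)) • b j := by
      conv_lhs => rw [← b.sum_repr x]
      rw [map_sum]
      refine Finset.sum_congr rfl fun j _ => ?_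
      rw [map_smul, hT j, smul_smul]
    have hinner : ⟪T x, x⟫ = ((∑ j, c j * ‖b.repr x j‖ ^ 2 : ℝ) : ℂ) := by
      rw [expand, sum_inner, Complex.ofReal_sum]
      refine Finset.sum_congr rfl fun j _ => ?_
      rw [inner_smul_left, ← b.repr_apply_apply x j, map_mul, Complex.conj_ofReal,
        mul_comm ((starRingEnd ℂ) (b.repr x j)) ((c j : ℂ)), mul_assoc, RCLike.conj_mul]
      norm_cast
      exact (Complex.ofReal_mul _ _).symm
    rw [ContinuousLinearMap.reApplyInnerSelf_apply,
      show (⟪T x, x⟫ : ℂ) = _ from hinner]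
    rw [show (RCLike.re : ℂ →+ ℝ) ((∑ j, c j * ‖b.repr x j‖ ^ 2 : ℝ) : ℂ)
        = ∑ j, c j * ‖b.repr x j‖ ^ 2 from Complex.ofReal_re _]
    exact Finset.sum_nonneg fun j _ => mul_nonneg (hc j) (by positivity)

set_option maxHeartbeats 1000000 in
/-- **Positivity of `-ℒ𝒫_{E_F}` (proof of Theorem 3.2), finite-dimensional form**:
if `A`, `B` are commuting selfadjoint operators on a finite-dimensional complex
inner product space and `P_A = χ_{(-∞,E]}(A)`, `P_B = χ_{(-∞,E]}(B)` are their
spectral projections onto `(-∞, E]` (characterized as the orthogonal projections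
onto the span of the eigenspaces with eigenvalue `≤ E`), then
`-(A - B)(P_A - P_B)` is selfadjoint and positive semidefinite. -/
theorem neg_liouvillian_positivity
    {𝓗 : Type} [NormedAddCommGroup 𝓗] [InnerProductSpace ℂ 𝓗] [FiniteDimensional ℂ 𝓗]
    (A B PA PB : 𝓗 →L[ℂ] 𝓗) (E : ℝ)
    (hA : IsSelfAdjoint A) (hB : IsSelfAdjoint B)
    (hcomm : A ∘L B = B ∘L A)
    (hPAsa : IsSelfAdjoint PA) (hPAidem : PA ∘L PA = PA)
    (hPAr : LinearMap.range (PA : 𝓗 →ₗ[ℂ] 𝓗)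
      = ⨆ (μ : ℝ) (_ : μ ≤ E), Module.End.eigenspace (A : 𝓗 →ₗ[ℂ] 𝓗) (μ : ℂ))
    (hPBsa : IsSelfAdjoint PB) (hPBidem : PB ∘L PB = PB)
    (hPBr : LinearMap.range (PB : 𝓗 →ₗ[ℂ] 𝓗)
      = ⨆ (μ : ℝ) (_ : μ ≤ E), Module.End.eigenspace (B : 𝓗 →ₗ[ℂ] 𝓗) (μ : ℂ)) :
    (-((A - B) ∘L (PA - PB))).IsPositive := by
  classical
  have hAs : (A : 𝓗 →ₗ[ℂ] 𝓗).IsSymmetric :=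
    ContinuousLinearMap.isSelfAdjoint_iff_isSymmetric.mp hA
  have hBs : (B : 𝓗 →ₗ[ℂ] 𝓗).IsSymmetric :=
    ContinuousLinearMap.isSelfAdjoint_iff_isSymmetric.mp hB
  have hcomm' : Commute (A : 𝓗 →ₗ[ℂ] 𝓗) (B : 𝓗 →ₗ[ℂ] 𝓗) := by
    have h := congrArg (ContinuousLinearMap.toLinearMap) hcomm
    change (A : 𝓗 →ₗ[ℂ] 𝓗) ∘ₗ (B : 𝓗 →ₗ[ℂ] 𝓗) = (B : 𝓗 →ₗ[ℂ] 𝓗) ∘ₗ (A : 𝓗 →ₗ[ℂ] 𝓗) at h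
    simpa only [Commute, SemiconjBy, Module.End.mul_eq_comp] using h
  set V : ℂ × ℂ → Submodule ℂ 𝓗 := fun i =>
    Module.End.eigenspace (A : 𝓗 →ₗ[ℂ] 𝓗) i.2 ⊓ Module.End.eigenspace (B : 𝓗 →ₗ[ℂ] 𝓗) i.1
    with hVdef
  have internal : DirectSum.IsInternal V := hAs.directSum_isInternal_of_commute hBs hcomm'
  have orth : OrthogonalFamily ℂ (fun i => V i) fun i => (V i).subtypeₗᵢ :=
    LinearMap.IsSymmetric.orthogonalFamily_eigenspace_inf_eigenspace hAs hBs
  have indep : iSupIndep V := internal.submodule_iSupIndep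
  haveI : Fintype {i : ℂ × ℂ // V i ≠ ⊥} := indep.fintypeNeBotOfFiniteDimensional
  set V' : {i : ℂ × ℂ // V i ≠ ⊥} → Submodule ℂ 𝓗 := fun i => V i.1 with hV'def
  have orth' : OrthogonalFamily ℂ (fun i => V' i) fun i => (V' i).subtypeₗᵢ :=
    orth.comp Subtype.coe_injective
  have hsup : iSup V' = ⊤ := by
    rw [eq_top_iff, ← internal.submodule_iSup_eq_top]
    refine iSup_le fun i => ?_
    by_cases h : V i = ⊥
    · rw [h]; exact bot_le
    · exact le_iSup_of_le (⟨i, h⟩ : {i : ℂ × ℂ // V i ≠ ⊥}) le_rfl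
  have internal' : DirectSum.IsInternal V' :=
    (DirectSum.isInternal_submodule_iff_iSupIndep_and_iSup_eq_top V').mpr
      ⟨indep.comp Subtype.coe_injective, hsup⟩
  have hnn : Module.finrank ℂ 𝓗 = Module.finrank ℂ 𝓗 := rfl
  set b := internal'.subordinateOrthonormalBasis hnn orth' with hbdef
  have hb : ∀ k, ∃ c : ℝ, 0 ≤ c ∧ (-((A - B) ∘L (PA - PB))) (b k) = (c : ℂ) • b k := by
    intro k
    obtain ⟨hmA, hmB⟩ := internal'.subordinateOrthonormalBasis_subordinate hnn k orth'
    have hbne : b k ≠ 0 := b.orthonormal.ne_zero k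
    set i := (internal'.subordinateOrthonormalBasisIndex hnn k orth').1 with hidef
    have hAev : Module.End.HasEigenvalue (A : 𝓗 →ₗ[ℂ] 𝓗) i.2 :=
      Module.End.hasEigenvalue_of_hasEigenvector ⟨hmA, hbne⟩
    have hBev : Module.End.HasEigenvalue (B : 𝓗 →ₗ[ℂ] 𝓗) i.1 :=
      Module.End.hasEigenvalue_of_hasEigenvector ⟨hmB, hbne⟩
    have hAre : ((i.2.re : ℝ) : ℂ) = i.2 :=
      Complex.conj_eq_iff_re.mp (hAs.conj_eigenvalue_eq_self hAev)
    have hBre : ((i.1.re : ℝ) : ℂ) = i.1 :=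
      Complex.conj_eq_iff_re.mp (hBs.conj_eigenvalue_eq_self hBev)
    set μ := i.2.re with hμdef
    set ν := i.1.re with hνdef
    have hmA' : b k ∈ Module.End.eigenspace (A : 𝓗 →ₗ[ℂ] 𝓗) ((μ : ℝ) : ℂ) := by
      rw [hAre]; exact hmA
    have hmB' : b k ∈ Module.End.eigenspace (B : 𝓗 →ₗ[ℂ] 𝓗) ((ν : ℝ) : ℂ) := by
      rw [hBre]; exact hmB
    have hPAbk : PA (b k) = if μ ≤ E then b k else 0 :=
      proj_eig_apply A PA E hAs hPAsa hPAidem hPAr hmA'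
    have hPBbk : PB (b k) = if ν ≤ E then b k else 0 :=
      proj_eig_apply B PB E hBs hPBsa hPBidem hPBr hmB'
    have hAbk : A (b k) = ((μ : ℝ) : ℂ) • b k := by
      have := Module.End.mem_eigenspace_iff.mp hmA'
      simpa using this
    have hBbk : B (b k) = ((ν : ℝ) : ℂ) • b k := by
      have := Module.End.mem_eigenspace_iff.mp hmB'
      simpa using this
    by_cases hμ : μ ≤ E <;> by_cases hν : ν ≤ E
    · refine ⟨0, le_refl 0, ?_⟩
      simp [ContinuousLinearMap.sub_apply, hPAbk, hPBbk, hμ, hν]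
    · refine ⟨ν - μ, by linarith, ?_⟩
      simp only [ContinuousLinearMap.neg_apply, ContinuousLinearMap.comp_apply,
        ContinuousLinearMap.sub_apply, hPAbk, hPBbk, if_pos hμ, if_neg hν, sub_zero,
        hAbk, hBbk]
      rw [Complex.ofReal_sub, sub_smul]
      abel
    · refine ⟨μ - ν, by linarith, ?_⟩
      simp only [ContinuousLinearMap.neg_apply, ContinuousLinearMap.comp_apply,
        ContinuousLinearMap.sub_apply, hPAbk, hPBbk, if_neg hμ, if_pos hν, zero_sub,
        map_neg, hAbk, hBbk]
      rw [Complex.ofReal_sub, sub_smul]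
      abel
    · refine ⟨0, le_refl 0, ?_⟩
      simp [ContinuousLinearMap.sub_apply, hPAbk, hPBbk, hμ, hν]
  choose c hc hTb using hb
  exact isPositive_of_onb_eigen _ b c hc hTb
end
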